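/- Let k ≥ 2 be an integer, K a field, G = (V,E) a finite simple graph, and d a natural number. If there exists a dual Nullstellensatz certificate of degree d for G over K (a family λ_α ∈ K indexed by α : V → ZMod k with λ_0 = 1 and, for every α with |α| ≤ d and every edge {u,v} ∈ E, Σ_{r ∈ ZMod k} λ_{α + r·(e_u − e_v) − e_v} = 0), then Bayer's k-coloring system for G has no Nullstellensatz certificate of degree at most d. -/

import Mathlib

open MvPolynomial

/-- The edge polynomial `q_{uv} = Σ_{r=0}^{k-1} x_u^{k-1-r} x_v^r` of Bayer's
`k`-coloring system, as a function on unordered pairs. -/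
noncomputable def bayerQ (K : Type*) [CommRing K] {V : Type*} (k : ℕ) :
    Sym2 V → MvPolynomial V K :=
  Sym2.lift ⟨fun u v => ∑ r ∈ Finset.range k, X u ^ (k - 1 - r) * X v ^ r, by
    intro u v
    show (∑ r ∈ Finset.range k, (X u : MvPolynomial V K) ^ (k - 1 - r) * X v ^ r)
        = ∑ r ∈ Finset.range k, X v ^ (k - 1 - r) * X u ^ r
    conv_rhs => rw [← Finset.sum_range_reflect]
    refine Finset.sum_congr rfl fun r hr => ?_
    rw [Finset.mem_range] at hr
    have h : k - 1 - (k - 1 - r) = r := by omega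
    rw [h]
    ring⟩

/-- Bayer's `k`-coloring system for the graph `G` has a Nullstellensatz certificate of
degree at most `d`. -/
def HasNullCert (K : Type*) [CommRing K] {V : Type*} [Fintype V] [DecidableEq V]
    (G : SimpleGraph V) [DecidableRel G.Adj] (k d : ℕ) : Prop :=
  ∃ (r : V → MvPolynomial V K) (s : Sym2 V → MvPolynomial V K),
    (∀ u, (r u).totalDegree ≤ d) ∧
    (∀ e ∈ G.edgeFinset, (s e).totalDegree ≤ d) ∧
    (∑ u, r u * (X u ^ k - 1)) + ∑ e ∈ G.edgeFinset, s e * bayerQ K k e = 1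

/-- `lam` is a dual Nullstellensatz certificate of degree `d` for `G` and `k` colors. -/
def IsDualCert (K : Type*) [CommRing K] {V : Type*} [Fintype V] [DecidableEq V]
    (G : SimpleGraph V) (k d : ℕ) (lam : (V → ZMod k) → K) : Prop :=
  lam 0 = 1 ∧
  ∀ α : V → ZMod k, (∑ v, (α v).val) ≤ d → ∀ u v : V, G.Adj u v →
    ∑ r ∈ Finset.range k,
      lam (α + (r : ZMod k) • (Pi.single u 1 - Pi.single v 1) - Pi.single v 1) = 0

noncomputable def Lmap {V K : Type*} [CommRing K] (k : ℕ) (lam : (V → ZMod k) → K) :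
    MvPolynomial V K →+ K :=
  (Finsupp.liftAddHom fun (m : V →₀ ℕ) => AddMonoidHom.mulRight (lam fun v => (m v : ZMod k))).comp
    AddMonoidAlgebra.coeffAddEquiv.toAddMonoidHom

lemma Lmap_monomial {V K : Type*} [CommRing K] (k : ℕ) (lam : (V → ZMod k) → K)
    (m : V →₀ ℕ) (c : K) :
    Lmap k lam (monomial m c) = c * lam (fun v => (m v : ZMod k)) := by
  rw [← single_eq_monomial]
  exact Finsupp.liftAddHom_apply_single (fun (m : V →₀ ℕ) => AddMonoidHom.mulRight (lam fun v => (m v : ZMod k))) _ _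

lemma Lmap_vertex {V K : Type*} [DecidableEq V] [CommRing K] (k : ℕ)
    (lam : (V → ZMod k) → K) (m : V →₀ ℕ) (c : K) (u : V) :
    Lmap k lam (monomial m c * (X u ^ k - 1)) = 0 := by
  rw [mul_sub, mul_one, X_pow_eq_monomial, monomial_mul, mul_one, map_sub,
    Lmap_monomial, Lmap_monomial]
  have : (fun v => (((m + Finsupp.single u k) v : ℕ) : ZMod k))
      = fun v => ((m v : ℕ) : ZMod k) := by
    funext v
    simp [Finsupp.single_apply]
  rw [this, sub_self]

lemma Lmap_edge {V K : Type*} [Fintype V] [DecidableEq V] [CommRing K]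
    (G : SimpleGraph V) (k d : ℕ) (hk : 2 ≤ k)
    (lam : (V → ZMod k) → K) (hlam : IsDualCert K G k d lam)
    (m : V →₀ ℕ) (c : K) (u v : V) (hadj : G.Adj u v)
    (hdeg : (∑ w, ((m w : ZMod k)).val) ≤ d) :
    Lmap k lam (monomial m c * bayerQ K k s(u, v)) = 0 := by
  have hne : u ≠ v := hadj.ne
  have hQ : bayerQ K k s(u, v)
      = ∑ r ∈ Finset.range k, X u ^ (k - 1 - r) * X v ^ r := rfl
  rw [hQ, Finset.mul_sum, map_sum]
  have key := hlam.2 (fun w => (m w : ZMod k)) hdeg v u hadj.symm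
  calc (∑ r ∈ Finset.range k,
        Lmap k lam (monomial m c * (X u ^ (k - 1 - r) * X v ^ r)))
      = ∑ r ∈ Finset.range k, c * lam ((fun w => (m w : ZMod k))
          + (r : ZMod k) • (Pi.single v 1 - Pi.single u 1) - Pi.single u 1) := by
        refine Finset.sum_congr rfl fun r hr => ?_
        rw [Finset.mem_range] at hr
        rw [X_pow_eq_monomial, X_pow_eq_monomial, monomial_mul, monomial_mul,
          mul_one, mul_one, Lmap_monomial]
        refine congrArg _ (congrArg lam ?_)
        funext w
        simp only [Finsupp.add_apply, Finsupp.single_apply, Pi.add_apply,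
          Pi.sub_apply, Pi.smul_apply, Pi.single_apply, smul_eq_mul]
        by_cases hwu : w = u
        · subst hwu
          simp [hne, if_neg (Ne.symm hne)]
          push_cast
          have h1 : k - 1 - r = k - (r + 1) := by omega
          have h2 : ((k - (r + 1) : ℕ) : ZMod k) = -((r : ZMod k) + 1) := by
            have : (r + 1) ≤ k := by omega
            rw [Nat.cast_sub this]
            push_cast
            simp
          rw [h1, h2]
          ring
        · by_cases hwv : w = v
          · subst hwv
            simp [hwu, Ne.symm hwu, Ne.symm hne]
          · simp [hwu, hwv, Ne.symm hwu, Ne.symm hwv]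
      _ = c * ∑ r ∈ Finset.range k, lam ((fun w => (m w : ZMod k))
          + (r : ZMod k) • (Pi.single v 1 - Pi.single u 1) - Pi.single u 1) := by
        rw [Finset.mul_sum]
      _ = 0 := by rw [key, mul_zero]

theorem no_certificate_of_dual_certificate
    {V : Type*} [Fintype V] [DecidableEq V]
    (K : Type*) [Field K]
    (k : ℕ) (hk : 2 ≤ k)
    (G : SimpleGraph V) [DecidableRel G.Adj] (d : ℕ)
    (lam : (V → ZMod k) → K) (hlam : IsDualCert K G k d lam) :
    ¬ HasNullCert K G k d := by
  haveI : NeZero k := ⟨by omega⟩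
  rintro ⟨r, s, hr, hs, heq⟩
  have h1 : Lmap k lam 1 = 1 := by
    rw [show (1 : MvPolynomial V K) = monomial 0 1 by rw [monomial_zero', C_1],
      Lmap_monomial, one_mul]
    have : (fun v => (((0 : V →₀ ℕ) v : ℕ) : ZMod k)) = (0 : V → ZMod k) := by
      funext v; simp
    rw [this, hlam.1]
  have h0 : Lmap k lam ((∑ u, r u * (X u ^ k - 1))
      + ∑ e ∈ G.edgeFinset, s e * bayerQ K k e) = 0 := by
    rw [map_add, map_sum, map_sum]
    have hA : ∀ u : V, Lmap k lam (r u * (X u ^ k - 1)) = 0 := by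
      intro u
      rw [(r u).as_sum, Finset.sum_mul, map_sum]
      exact Finset.sum_eq_zero fun m hm => Lmap_vertex k lam m _ u
    have hB : ∀ e ∈ G.edgeFinset, Lmap k lam (s e * bayerQ K k e) = 0 := by
      intro e he
      induction e using Sym2.ind with
      | _ u v =>
        have hadj : G.Adj u v := by
          rwa [SimpleGraph.mem_edgeFinset, SimpleGraph.mem_edgeSet] at he
        rw [(s s(u, v)).as_sum, Finset.sum_mul, map_sum]
        refine Finset.sum_eq_zero fun m hm => ?_
        refine Lmap_edge G k d hk lam hlam m _ u v hadj ?_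
        have hmd : (∑ w, m w) ≤ d := by
          calc (∑ w, m w) = m.sum fun _ n => n := by
                rw [Finsupp.sum_fintype]; intro; rfl
            _ ≤ (s s(u, v)).totalDegree := MvPolynomial.le_totalDegree hm
            _ ≤ d := hs _ he
        calc (∑ w, ((m w : ZMod k)).val) ≤ ∑ w, m w := by
              refine Finset.sum_le_sum fun w _ => ?_
              rw [ZMod.val_natCast]
              exact Nat.mod_le _ _
          _ ≤ d := hmd
    rw [Finset.sum_eq_zero fun u _ => hA u, Finset.sum_eq_zero hB, add_zero]
  rw [heq, h1] at h0
  exact one_ne_zero h0
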